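/- If G is a 4-critical graph of Ore-degree at most 7 and G is an Ore-composition of two 4-critical graphs G1 and G2, then both G1 and G2 have Ore-degree at most 7. -/

import Mathlib

open SimpleGraph

/-- The degree of a vertex, as the cardinality of its neighbor set. -/
noncomputable def deg {V : Type} (G : SimpleGraph V) (v : V) : ℕ :=
  Nat.card (G.neighborSet v)

/-- The number of edges of a graph. -/
noncomputable def numEdges {V : Type} (G : SimpleGraph V) : ℕ :=
  Nat.card G.edgeSet

/-- The independence number of a graph. -/
noncomputable def indepNum {V : Type} (G : SimpleGraph V) : ℕ :=
  sSup {n | ∃ s : Set V, (∀ u ∈ s, ∀ v ∈ s, ¬ G.Adj u v) ∧ s.ncard = n}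

/-- The set of vertices of degree at most three. -/
noncomputable def D3set {V : Type} (G : SimpleGraph V) : Set V :=
  {v | deg G v ≤ 3}

/-- `D3(G)`: the subgraph induced by the vertices of degree at most three. -/
noncomputable def D3 {V : Type} (G : SimpleGraph V) : SimpleGraph (D3set G) :=
  G.induce (D3set G)

/-- The potential of a graph: `p(G) = 4.8 |V(G)| - 3 |E(G)| + 0.6 α(D3(G))`. -/
noncomputable def potential {V : Type} (G : SimpleGraph V) : ℚ :=
  (24/5 : ℚ) * Nat.card V - 3 * numEdges G + (3/5 : ℚ) * _root_.indepNum (D3 G)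

/-- The potential of a subset `R` of the vertices of `G`:
`p(R) = 4.8 |R| - 3 |E(G[R])| + 0.6 α(G[D3(G) ∩ R])`. -/
noncomputable def potentialOf {V : Type} (G : SimpleGraph V) (R : Set V) : ℚ :=
  (24/5 : ℚ) * R.ncard - 3 * numEdges (G.induce R)
    + (3/5 : ℚ) * _root_.indepNum (G.induce (D3set G ∩ R))

/-- A graph is `k`-critical if it is not `(k-1)`-colorable but every proper
subgraph is `(k-1)`-colorable. -/
def IsKCritical {V : Type} (G : SimpleGraph V) (k : ℕ) : Prop :=
  ¬ G.Colorable (k - 1) ∧ ∀ H : SimpleGraph V, H ≤ G → H ≠ G → H.Colorable (k - 1)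

/-- A graph has Ore-degree at most `d` if `d(u) + d(v) ≤ d` for every edge `uv`. -/
def OreDegreeAtMost {V : Type} (G : SimpleGraph V) (d : ℕ) : Prop :=
  ∀ u v, G.Adj u v → deg G u + deg G v ≤ d

/-- The Ore-composition of `G1` (edge-side, with replaced edge `xy`) and `G2`
(split-side, with split vertex `z` whose incident edges going to `A` are attached
to `x` and the remaining ones to `y`). -/
def oreCompose {V1 V2 : Type} (G1 : SimpleGraph V1) (G2 : SimpleGraph V2)
    (x y : V1) (z : V2) (A : Set V2) :
    SimpleGraph (V1 ⊕ {v : V2 // v ≠ z}) :=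
  SimpleGraph.fromRel (fun a b =>
    match a, b with
    | Sum.inl u, Sum.inl v =>
        G1.Adj u v ∧ ¬((u = x ∧ v = y) ∨ (u = y ∧ v = x))
    | Sum.inl u, Sum.inr v =>
        (u = x ∧ G2.Adj z v.1 ∧ v.1 ∈ A) ∨ (u = y ∧ G2.Adj z v.1 ∧ v.1 ∉ A)
    | Sum.inr _, Sum.inl _ => False
    | Sum.inr u, Sum.inr v => G2.Adj u.1 v.1)

/-- `G` is an Ore-composition of `G1` and `G2`: there are a replaced edge `xy` of
`G1`, a split vertex `z` of `G2`, and a splitting of the edges at `z` into two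
nonempty parts, such that `G` is isomorphic to the resulting composition. -/
def IsOreComposition {V V1 V2 : Type} (G : SimpleGraph V)
    (G1 : SimpleGraph V1) (G2 : SimpleGraph V2) : Prop :=
  ∃ (x y : V1) (z : V2) (A : Set V2),
    G1.Adj x y ∧ (∃ p, G2.Adj z p ∧ p ∈ A) ∧ (∃ q, G2.Adj z q ∧ q ∉ A) ∧
    Nonempty (G ≃g oreCompose G1 G2 x y z A)

/-- The family of `4`-Ore graphs: the smallest family of graphs containing `K4`
and closed under Ore-compositions. -/
inductive IsFourOre : ∀ {V : Type}, SimpleGraph V → Prop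
  | k4 {V : Type} (G : SimpleGraph V) :
      Nonempty (G ≃g completeGraph (Fin 4)) → IsFourOre G
  | comp {V V1 V2 : Type} (G : SimpleGraph V)
      (G1 : SimpleGraph V1) (G2 : SimpleGraph V2) :
      IsFourOre G1 → IsFourOre G2 → IsOreComposition G G1 G2 → IsFourOre G

/-- The boundary of a set `R`: the vertices of `R` with a neighbor outside `R`. -/
def boundary {V : Type} (G : SimpleGraph V) (R : Set V) : Set V :=
  {v | v ∈ R ∧ ∃ u, u ∉ R ∧ G.Adj v u}

/-- A proper subset `R` of the vertices with `|R| ≥ 2` is collapsible if in every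
proper 3-coloring of `G[R]` all vertices of the boundary of `R` get the same color. -/
def Collapsible {V : Type} (G : SimpleGraph V) (R : Set V) : Prop :=
  R ≠ Set.univ ∧ 2 ≤ R.ncard ∧
  ∀ φ : V → Fin 3, (∀ u ∈ R, ∀ v ∈ R, G.Adj u v → φ u ≠ φ v) →
    ∀ u ∈ boundary G R, ∀ v ∈ boundary G R, φ u = φ v

/-- The critical complement of a set `R`: identify the boundary of `R` to a single
vertex (the vertex `none`) and delete the rest of `R`. -/
def criticalComplement {V : Type} (G : SimpleGraph V) (R : Set V) :
    SimpleGraph (Option {v : V // v ∉ R}) :=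
  SimpleGraph.fromRel (fun a b =>
    match a, b with
    | some u, some v => G.Adj u.1 v.1
    | some u, none => ∃ w ∈ boundary G R, G.Adj u.1 w
    | none, some _ => False
    | none, none => False)

/-- A nonempty proper subset `R` with boundary `S` is cocollapsible if every vertex
of `S` has exactly one neighbor outside `R`, and for every non-constant list of
forbidden colors on `S` there is a proper 3-coloring of `G[R]` avoiding them. -/
def Cocollapsible {V : Type} (G : SimpleGraph V) (R : Set V) : Prop :=
  R.Nonempty ∧ R ≠ Set.univ ∧
  (∀ v ∈ boundary G R, ∃! u, u ∉ R ∧ G.Adj v u) ∧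
  ∀ f : V → Fin 3,
    (∃ u ∈ boundary G R, ∃ v ∈ boundary G R, f u ≠ f v) →
    ∃ φ : V → Fin 3, (∀ u ∈ R, ∀ v ∈ R, G.Adj u v → φ u ≠ φ v) ∧
      ∀ v ∈ boundary G R, φ v ≠ f v

/-- A cocollapsible set is nontrivial if its complement has more than one vertex. -/
def NontrivialCocollapsible {V : Type} (G : SimpleGraph V) (R : Set V) : Prop :=
  Cocollapsible G R ∧ 1 < (Rᶜ : Set V).ncard

/-- The graph `H` together with the (possibly new) edge `uv`. -/
def withEdge {W : Type} (H : SimpleGraph W) (u v : W) : SimpleGraph W :=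
  H ⊔ SimpleGraph.fromEdgeSet {s(u, v)}

/-- A collapsible set `R` is tight if for any two distinct boundary vertices `u, v`
the graph `G[R] + uv` is `4`-critical. -/
def TightCollapsible {V : Type} (G : SimpleGraph V) (R : Set V) : Prop :=
  Collapsible G R ∧
  ∀ u (hu : u ∈ boundary G R) v (hv : v ∈ boundary G R), u ≠ v →
    IsKCritical (withEdge (G.induce R) ⟨u, hu.1⟩ ⟨v, hv.1⟩) 4

/-- `s(H) = |E(H)| - |V(H)| + α(H)`. -/
noncomputable def sVal {V : Type} (H : SimpleGraph V) : ℤ :=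
  (numEdges H : ℤ) - (Nat.card V : ℤ) + (_root_.indepNum H : ℤ)

/-- `H7`: the unique Ore-composition of two copies of `K4`. Vertices `0,1,2,3`
form the edge-side `K4` with replaced edge `01`; the split vertex of the second
`K4` on `{z,4,5,6}` is split so that `0` gets the edge to `4` and `1` gets the
edges to `5` and `6`. -/
def H7 : SimpleGraph (Fin 7) :=
  SimpleGraph.fromRel (fun a b =>
    ((a, b) : Fin 7 × Fin 7) ∈
      ([(0, 2), (0, 3), (1, 2), (1, 3), (2, 3), (4, 5), (4, 6), (5, 6),
        (0, 4), (1, 5), (1, 6)] : List (Fin 7 × Fin 7)))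

/-- A diamond in `G`: a subgraph isomorphic to `K4` minus an edge whose two
vertices of degree three within the subgraph (`w1` and `w2`) also have degree
three in `G`.  The vertices `e1` and `e2` are the ends of the diamond. -/
def IsDiamond {V : Type} (G : SimpleGraph V) (e1 e2 w1 w2 : V) : Prop :=
  e1 ≠ e2 ∧ e1 ≠ w1 ∧ e1 ≠ w2 ∧ e2 ≠ w1 ∧ e2 ≠ w2 ∧ w1 ≠ w2 ∧
  G.Adj w1 w2 ∧ G.Adj e1 w1 ∧ G.Adj e1 w2 ∧ G.Adj e2 w1 ∧ G.Adj e2 w2 ∧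
  deg G w1 = 3 ∧ deg G w2 = 3

/-- A triangle with a pendant edge. -/
def trianglePendant1 : SimpleGraph (Fin 4) :=
  SimpleGraph.fromRel (fun a b =>
    ((a, b) : Fin 4 × Fin 4) ∈ ([(0, 1), (1, 2), (2, 0), (0, 3)] : List (Fin 4 × Fin 4)))

/-- A triangle with a pendant path on two further vertices. -/
def trianglePendant2 : SimpleGraph (Fin 5) :=
  SimpleGraph.fromRel (fun a b =>
    ((a, b) : Fin 5 × Fin 5) ∈
      ([(0, 1), (1, 2), (2, 0), (0, 3), (3, 4)] : List (Fin 5 × Fin 5)))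

/-! ### Auxiliary lemmas for statement 3 -/

lemma minDeg {V : Type} [Fintype V] {G : SimpleGraph V} (hc : IsKCritical G 4)
    {u w : V} (huw : G.Adj u w) : 3 ≤ deg G u := by
  classical
  by_contra hlt
  push_neg at hlt
  have hle2 : (G.neighborSet u).ncard ≤ 2 := by
    have : deg G u = (G.neighborSet u).ncard := rfl
    omega
  set H := G.deleteEdges {s(u, w)} with hH
  have hHle : H ≤ G := deleteEdges_le _
  have hHne : H ≠ G := by
    intro h
    have : H.Adj u w := h ▸ huw
    rw [deleteEdges_adj] at this
    exact this.2 rfl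
  obtain ⟨φ⟩ := hc.2 H hHle hHne
  have himg : ((φ : V → Fin 3) '' (G.neighborSet u)).ncard ≤ 2 :=
    le_trans (Set.ncard_image_le (Set.toFinite _)) hle2
  have hne_univ : ((φ : V → Fin 3) '' (G.neighborSet u)) ≠ Set.univ := by
    intro h
    rw [h, Set.ncard_univ] at himg
    simp at himg
  obtain ⟨c, hc'⟩ := (Set.ne_univ_iff_exists_notMem _).mp hne_univ
  set ψ : V → Fin 3 := Function.update (φ : V → Fin 3) u c with hψ
  have : G.Colorable 3 := by
    refine ⟨Coloring.mk ψ ?_⟩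
    intro a b hab heq
    by_cases ha : a = u
    · subst ha
      have hbne : b ≠ a := (G.ne_of_adj hab).symm
      rw [hψ, Function.update_self, Function.update_of_ne hbne] at heq
      exact hc' ⟨b, hab, heq.symm⟩
    · by_cases hb : b = u
      · subst hb
        have hane : a ≠ b := G.ne_of_adj hab
        rw [hψ, Function.update_self, Function.update_of_ne hane] at heq
        exact hc' ⟨a, hab.symm, heq⟩
      · rw [hψ, Function.update_of_ne ha, Function.update_of_ne hb] at heq
        have : H.Adj a b := by
          rw [deleteEdges_adj]
          refine ⟨hab, ?_⟩
          simp only [Set.mem_singleton_iff, Sym2.eq, Sym2.rel_iff', Prod.mk.injEq, Prod.swap_prod_mk]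
          rintro (⟨h1, h2⟩ | ⟨h1, h2⟩)
          · exact ha h1
          · exact hb h2
        exact φ.valid this heq
  exact hc.1 this

section
variable {V1 V2 : Type} (G1 : SimpleGraph V1) (G2 : SimpleGraph V2)
    (x y : V1) (z : V2) (A : Set V2)

local notation "H" => oreCompose G1 G2 x y z A

lemma adj_inl_inl {u v : V1} :
    (H).Adj (Sum.inl u) (Sum.inl v) ↔
      G1.Adj u v ∧ ¬((u = x ∧ v = y) ∨ (u = y ∧ v = x)) := by
  rw [oreCompose, fromRel_adj]
  constructor
  · rintro ⟨-, ⟨h1, h2⟩ | ⟨h1, h2⟩⟩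
    · exact ⟨h1, h2⟩
    · exact ⟨h1.symm, fun h => h2 (h.symm.imp And.symm And.symm)⟩
  · rintro ⟨h1, h2⟩
    exact ⟨by simpa using h1.ne, Or.inl ⟨h1, h2⟩⟩

lemma adj_inl_inr {u : V1} {w : {v : V2 // v ≠ z}} :
    (H).Adj (Sum.inl u) (Sum.inr w) ↔
      (u = x ∧ G2.Adj z w.1 ∧ w.1 ∈ A) ∨ (u = y ∧ G2.Adj z w.1 ∧ w.1 ∉ A) := by
  rw [oreCompose, fromRel_adj]
  constructor
  · rintro ⟨-, h | h⟩
    · exact h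
    · exact h.elim
  · intro h
    exact ⟨by simp, Or.inl h⟩

lemma adj_inr_inl {u : V1} {w : {v : V2 // v ≠ z}} :
    (H).Adj (Sum.inr w) (Sum.inl u) ↔
      (u = x ∧ G2.Adj z w.1 ∧ w.1 ∈ A) ∨ (u = y ∧ G2.Adj z w.1 ∧ w.1 ∉ A) := by
  rw [SimpleGraph.adj_comm, adj_inl_inr]

lemma adj_inr_inr {u w : {v : V2 // v ≠ z}} :
    (H).Adj (Sum.inr u) (Sum.inr w) ↔ G2.Adj u.1 w.1 := by
  rw [oreCompose, fromRel_adj]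
  constructor
  · rintro ⟨-, h | h⟩
    · exact h
    · exact h.symm
  · intro h
    refine ⟨?_, Or.inl h⟩
    simp only [ne_eq, Sum.inr.injEq]
    intro he
    exact h.ne (congrArg Subtype.val he)

end

section DegLemmas
variable {V1 V2 : Type} [Fintype V1] [Fintype V2] (G1 : SimpleGraph V1) (G2 : SimpleGraph V2)
    (x y : V1) (z : V2) (A : Set V2)

local notation "H" => oreCompose G1 G2 x y z A

lemma sub_ncard (P : V2 → Prop) (hP : ∀ u, P u → u ≠ z) :
    ({u : {v : V2 // v ≠ z} | P u.1}).ncard = ({u : V2 | P u}).ncard := by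
  rw [← Set.ncard_image_of_injective _ (Subtype.val_injective (p := fun v => v ≠ z))]
  congr 1
  ext u
  simp only [Set.mem_image, Set.mem_setOf_eq, Subtype.exists, exists_and_left, exists_prop,
    exists_eq_right_right]
  exact and_iff_left_iff_imp.mpr (hP u)

lemma deg_eq_ncard {V : Type} (G : SimpleGraph V) (v : V) :
    deg G v = (G.neighborSet v).ncard := rfl

lemma deg_inl_other {v : V1} (hvx : v ≠ x) (hvy : v ≠ y) :
    deg (H) (Sum.inl v) = deg G1 v := by
  have hset : (H).neighborSet (Sum.inl v) = Sum.inl '' G1.neighborSet v := by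
    ext s
    cases s with
    | inl u =>
        simp only [mem_neighborSet, adj_inl_inl, Set.mem_image, Sum.inl.injEq,
          exists_eq_right]
        constructor
        · exact fun h => h.1
        · intro h
          refine ⟨h, ?_⟩
          rintro (⟨h1, -⟩ | ⟨h1, -⟩) <;> [exact hvx h1; exact hvy h1]
    | inr w =>
        simp only [mem_neighborSet, adj_inl_inr, Set.mem_image]
        constructor
        · rintro (⟨h1, -⟩ | ⟨h1, -⟩) <;> [exact absurd h1 hvx; exact absurd h1 hvy]
        · rintro ⟨u, -, h⟩
          exact absurd h (by simp)
  rw [deg_eq_ncard, deg_eq_ncard, hset, Set.ncard_image_of_injective _ Sum.inl_injective]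

lemma deg_inl_x (hxy : G1.Adj x y) :
    deg (H) (Sum.inl x) + 1 = deg G1 x + ({w : V2 | G2.Adj z w ∧ w ∈ A}).ncard := by
  have hxny : x ≠ y := hxy.ne
  have hset : (H).neighborSet (Sum.inl x) =
      Sum.inl '' (G1.neighborSet x \ {y}) ∪
        Sum.inr '' {w : {v : V2 // v ≠ z} | G2.Adj z w.1 ∧ w.1 ∈ A} := by
    ext s
    cases s with
    | inl u =>
        simp only [mem_neighborSet, adj_inl_inl, Set.mem_union, Set.mem_image, Sum.inl.injEq,
          exists_eq_right, Set.mem_diff, Set.mem_singleton_iff, mem_neighborSet,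
          (by simp : ∀ w : {v : V2 // v ≠ z}, ¬(Sum.inl u = Sum.inr w))]
        constructor
        · rintro ⟨h1, h2⟩
          refine Or.inl ⟨h1, fun h => h2 (Or.inl ⟨trivial, h⟩)⟩
        · rintro (⟨h1, h2⟩ | ⟨w, -, hw⟩)
          · exact ⟨h1, by rintro (⟨-, h⟩ | ⟨h, -⟩) <;> [exact h2 h; exact hxny h]⟩
          · exact absurd hw (by simp)
    | inr w =>
        simp only [mem_neighborSet, adj_inl_inr, Set.mem_union, Set.mem_image,
          Set.mem_setOf_eq]
        constructor
        · rintro (⟨-, h⟩ | ⟨h1, -⟩)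
          · exact Or.inr ⟨w, h, rfl⟩
          · exact absurd h1 hxny
        · rintro (⟨u, -, h⟩ | ⟨u, hu, h⟩)
          · exact absurd h (by simp)
          · obtain rfl : u = w := Sum.inr_injective h
            exact Or.inl ⟨trivial, hu⟩
  have hdisj : Disjoint (Sum.inl '' (G1.neighborSet x \ {y}) : Set (V1 ⊕ {v : V2 // v ≠ z}))
      (Sum.inr '' {w : {v : V2 // v ≠ z} | G2.Adj z w.1 ∧ w.1 ∈ A}) := by
    rw [Set.disjoint_left]
    rintro s ⟨u, -, rfl⟩ ⟨w, -, hw⟩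
    exact absurd hw (by simp)
  have h1 : (G1.neighborSet x \ {y}).ncard + 1 = (G1.neighborSet x).ncard :=
    Set.ncard_diff_singleton_add_one hxy (Set.toFinite _)
  rw [deg_eq_ncard, deg_eq_ncard, hset,
    Set.ncard_union_eq hdisj (Set.toFinite _) (Set.toFinite _),
    Set.ncard_image_of_injective _ Sum.inl_injective,
    Set.ncard_image_of_injective _ Sum.inr_injective,
    sub_ncard z (fun u => G2.Adj z u ∧ u ∈ A) (fun u h => h.1.ne')]
  omega
end DegLemmas

section DegLemmas2
variable {V1 V2 : Type} [Fintype V1] [Fintype V2] (G1 : SimpleGraph V1) (G2 : SimpleGraph V2)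
    (x y : V1) (z : V2) (A : Set V2)

lemma oreSwap : oreCompose G1 G2 x y z A = oreCompose G1 G2 y x z Aᶜ := by
  ext s t
  cases s <;> cases t <;>
    simp only [adj_inl_inl, adj_inl_inr, adj_inr_inl, adj_inr_inr, Set.mem_compl_iff] <;>
    tauto

lemma deg_inl_y (hxy : G1.Adj x y) :
    deg (oreCompose G1 G2 x y z A) (Sum.inl y) + 1 =
      deg G1 y + ({w : V2 | G2.Adj z w ∧ w ∉ A}).ncard := by
  rw [oreSwap]
  have := deg_inl_x G1 G2 y x z Aᶜ hxy.symm
  simpa only [Set.mem_compl_iff] using this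

lemma deg_inr (w : {v : V2 // v ≠ z}) :
    deg (oreCompose G1 G2 x y z A) (Sum.inr w) = deg G2 w.1 := by
  classical
  have hsub : ({u : {v : V2 // v ≠ z} | G2.Adj w.1 u.1}).ncard
      = ({u : V2 | G2.Adj w.1 u ∧ u ≠ z}).ncard := by
    rw [show {u : {v : V2 // v ≠ z} | G2.Adj w.1 u.1}
        = {u : {v : V2 // v ≠ z} | G2.Adj w.1 u.1 ∧ u.1 ≠ z} by ext u; simp [u.2]]
    exact sub_ncard z (fun u => G2.Adj w.1 u ∧ u ≠ z) (fun u h => h.2)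
  by_cases hadj : G2.Adj z w.1
  · -- z is a neighbor of w in G2; in H it is replaced by x or y
    set c : V1 := if w.1 ∈ A then x else y with hc
    have hset : (oreCompose G1 G2 x y z A).neighborSet (Sum.inr w) =
        {Sum.inl c} ∪ Sum.inr '' {u : {v : V2 // v ≠ z} | G2.Adj w.1 u.1} := by
      ext s
      cases s with
      | inl u =>
          simp only [mem_neighborSet, adj_inr_inl, Set.mem_union, Set.mem_singleton_iff,
            Set.mem_image, Sum.inl.injEq]
          constructor
          · rintro (⟨rfl, -, hA⟩ | ⟨rfl, -, hA⟩)
            · exact Or.inl (by rw [hc, if_pos hA])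
            · exact Or.inl (by rw [hc, if_neg hA])
          · rintro (rfl | ⟨u', -, h⟩)
            · by_cases hA : w.1 ∈ A
              · rw [hc, if_pos hA]; exact Or.inl ⟨rfl, hadj, hA⟩
              · rw [hc, if_neg hA]; exact Or.inr ⟨rfl, hadj, hA⟩
            · exact absurd h (by simp)
      | inr u =>
          simp only [mem_neighborSet, adj_inr_inr, Set.mem_union, Set.mem_singleton_iff,
            Set.mem_image, Set.mem_setOf_eq]
          constructor
          · intro h; exact Or.inr ⟨u, h, rfl⟩
          · rintro (h | ⟨u', hu', h⟩)
            · exact absurd h (by simp)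
            · obtain rfl : u' = u := Sum.inr_injective h
              exact hu'
    have hG2set : G2.neighborSet w.1 = {z} ∪ {u : V2 | G2.Adj w.1 u ∧ u ≠ z} := by
      ext u
      simp only [mem_neighborSet, Set.mem_union, Set.mem_singleton_iff, Set.mem_setOf_eq]
      constructor
      · intro h
        by_cases hu : u = z
        · exact Or.inl hu
        · exact Or.inr ⟨h, hu⟩
      · rintro (rfl | ⟨h, -⟩)
        · exact hadj.symm
        · exact h
    have hd1 : Disjoint ({Sum.inl c} : Set (V1 ⊕ {v : V2 // v ≠ z}))
        (Sum.inr '' {u : {v : V2 // v ≠ z} | G2.Adj w.1 u.1}) := by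
      rw [Set.disjoint_left]
      rintro s rfl ⟨u, -, h⟩
      exact absurd h (by simp)
    have hd2 : Disjoint ({z} : Set V2) {u : V2 | G2.Adj w.1 u ∧ u ≠ z} := by
      rw [Set.disjoint_left]
      rintro s rfl ⟨-, h⟩
      exact h rfl
    rw [deg_eq_ncard, deg_eq_ncard, hset, hG2set,
      Set.ncard_union_eq hd1 (Set.toFinite _) (Set.toFinite _),
      Set.ncard_union_eq hd2 (Set.toFinite _) (Set.toFinite _),
      Set.ncard_image_of_injective _ Sum.inr_injective, Set.ncard_singleton,
      Set.ncard_singleton, hsub]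
  · -- z is not a neighbor of w
    have hset : (oreCompose G1 G2 x y z A).neighborSet (Sum.inr w) =
        Sum.inr '' {u : {v : V2 // v ≠ z} | G2.Adj w.1 u.1} := by
      ext s
      cases s with
      | inl u =>
          simp only [mem_neighborSet, adj_inr_inl, Set.mem_image]
          constructor
          · rintro (⟨-, h, -⟩ | ⟨-, h, -⟩) <;> exact absurd h hadj
          · rintro ⟨u', -, h⟩
            exact absurd h (by simp)
      | inr u =>
          simp only [mem_neighborSet, adj_inr_inr, Set.mem_image, Set.mem_setOf_eq]
          constructor
          · intro h; exact ⟨u, h, rfl⟩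
          · rintro ⟨u', hu', h⟩
            obtain rfl : u' = u := Sum.inr_injective h
            exact hu'
    have hG2set : G2.neighborSet w.1 = {u : V2 | G2.Adj w.1 u ∧ u ≠ z} := by
      ext u
      simp only [mem_neighborSet, Set.mem_setOf_eq]
      constructor
      · intro h
        refine ⟨h, ?_⟩
        rintro rfl
        exact hadj h.symm
      · exact fun h => h.1
    rw [deg_eq_ncard, deg_eq_ncard, hset, hG2set,
      Set.ncard_image_of_injective _ Sum.inr_injective, hsub]

lemma deg_split :
    ({w : V2 | G2.Adj z w ∧ w ∈ A}).ncard + ({w : V2 | G2.Adj z w ∧ w ∉ A}).ncard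
      = deg G2 z := by
  classical
  rw [deg_eq_ncard, ← Set.ncard_union_eq ?_ (Set.toFinite _) (Set.toFinite _)]
  · congr 1
    ext u
    simp only [Set.mem_union, Set.mem_setOf_eq, mem_neighborSet]
    tauto
  · rw [Set.disjoint_left]
    rintro u ⟨-, h⟩ ⟨-, h'⟩
    exact h' h
end DegLemmas2

lemma deg_iso {V W : Type} {G : SimpleGraph V} {G' : SimpleGraph W} (e : G ≃g G') (v : V) :
    deg G' (e v) = deg G v :=
  (Nat.card_congr (e.mapNeighborSet v)).symm

/-- If `G` is a `4`-critical graph of Ore-degree at most `7` and `G`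
is an Ore-composition of two `4`-critical graphs `G1` and `G2`, then both `G1`
and `G2` have Ore-degree at most `7`. -/
theorem statement_3 {V V1 V2 : Type} [Fintype V] [Fintype V1] [Fintype V2]
    (G : SimpleGraph V) (G1 : SimpleGraph V1) (G2 : SimpleGraph V2)
    (hG : IsKCritical G 4) (hOre : OreDegreeAtMost G 7)
    (h1 : IsKCritical G1 4) (h2 : IsKCritical G2 4)
    (hcomp : IsOreComposition G G1 G2) :
    OreDegreeAtMost G1 7 ∧ OreDegreeAtMost G2 7 := by
  obtain ⟨x, y, z, A, hxy, ⟨p, hzp, hpA⟩, ⟨q, hzq, hqA⟩, ⟨e⟩⟩ := hcomp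
  -- transfer Ore-degree and minimum degree conditions from `G` to the composition
  have hOreH : ∀ s t, (oreCompose G1 G2 x y z A).Adj s t →
      deg (oreCompose G1 G2 x y z A) s + deg (oreCompose G1 G2 x y z A) t ≤ 7 := by
    intro s t hst
    have h' : G.Adj (e.symm s) (e.symm t) := e.symm.map_adj_iff.mpr hst
    have := hOre _ _ h'
    rwa [deg_iso e.symm s, deg_iso e.symm t] at this
  -- basic degree facts
  have hax := deg_inl_x G1 G2 x y z A hxy
  have hay := deg_inl_y G1 G2 x y z A hxy
  have hsplit := deg_split G2 z A
  have ha1 : 1 ≤ ({w : V2 | G2.Adj z w ∧ w ∈ A}).ncard :=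
    (Set.ncard_pos (Set.toFinite _)).mpr ⟨p, hzp, hpA⟩
  have hb1 : 1 ≤ ({w : V2 | G2.Adj z w ∧ w ∉ A}).ncard :=
    (Set.ncard_pos (Set.toFinite _)).mpr ⟨q, hzq, hqA⟩
  have hz3 : 3 ≤ deg G2 z := minDeg h2 hzp
  have hx3 : 3 ≤ deg G1 x := minDeg h1 hxy
  have hy3 : 3 ≤ deg G1 y := minDeg h1 hxy.symm
  -- `x` and `y` have degree at most 4 in the composition
  have hxp : (oreCompose G1 G2 x y z A).Adj (Sum.inl x) (Sum.inr ⟨p, hzp.ne'⟩) :=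
    (adj_inl_inr G1 G2 x y z A).mpr (Or.inl ⟨rfl, hzp, hpA⟩)
  have hyq : (oreCompose G1 G2 x y z A).Adj (Sum.inl y) (Sum.inr ⟨q, hzq.ne'⟩) :=
    (adj_inl_inr G1 G2 x y z A).mpr (Or.inr ⟨rfl, hzq, hqA⟩)
  have hx4 : deg (oreCompose G1 G2 x y z A) (Sum.inl x) ≤ 4 := by
    have h0 := hOreH _ _ hxp
    have hdp : deg (oreCompose G1 G2 x y z A) (Sum.inr ⟨p, hzp.ne'⟩) = deg G2 p :=
      deg_inr G1 G2 x y z A ⟨p, hzp.ne'⟩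
    have hp3 : 3 ≤ deg G2 p := minDeg h2 hzp.symm
    omega
  have hy4 : deg (oreCompose G1 G2 x y z A) (Sum.inl y) ≤ 4 := by
    have h0 := hOreH _ _ hyq
    have hdq : deg (oreCompose G1 G2 x y z A) (Sum.inr ⟨q, hzq.ne'⟩) = deg G2 q :=
      deg_inr G1 G2 x y z A ⟨q, hzq.ne'⟩
    have hq3 : 3 ≤ deg G2 q := minDeg h2 hzq.symm
    omega
  constructor
  · -- Ore-degree of G1
    have hbound : ∀ v, deg G1 v ≤ deg (oreCompose G1 G2 x y z A) (Sum.inl v) := by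
      intro v
      by_cases hvx : v = x
      · subst hvx; omega
      · by_cases hvy : v = y
        · subst hvy; omega
        · rw [deg_inl_other G1 G2 x y z A hvx hvy]
    intro u v huv
    by_cases hcase : (u = x ∧ v = y) ∨ (u = y ∧ v = x)
    · rcases hcase with ⟨rfl, rfl⟩ | ⟨rfl, rfl⟩ <;> omega
    · have hadj : (oreCompose G1 G2 x y z A).Adj (Sum.inl u) (Sum.inl v) :=
        (adj_inl_inl G1 G2 x y z A).mpr ⟨huv, hcase⟩
      have h0 := hOreH _ _ hadj
      have hbu := hbound u
      have hbv := hbound v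
      omega
  · -- Ore-degree of G2
    have hzbound : ∀ v, G2.Adj z v → deg G2 z + deg G2 v ≤ 7 := by
      intro v hv
      have hdv : deg (oreCompose G1 G2 x y z A) (Sum.inr ⟨v, hv.ne'⟩) = deg G2 v :=
        deg_inr G1 G2 x y z A ⟨v, hv.ne'⟩
      by_cases hA : v ∈ A
      · have hadj : (oreCompose G1 G2 x y z A).Adj (Sum.inl x) (Sum.inr ⟨v, hv.ne'⟩) :=
          (adj_inl_inr G1 G2 x y z A).mpr (Or.inl ⟨rfl, hv, hA⟩)
        have h0 := hOreH _ _ hadj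
        omega
      · have hadj : (oreCompose G1 G2 x y z A).Adj (Sum.inl y) (Sum.inr ⟨v, hv.ne'⟩) :=
          (adj_inl_inr G1 G2 x y z A).mpr (Or.inr ⟨rfl, hv, hA⟩)
        have h0 := hOreH _ _ hadj
        omega
    intro u v huv
    by_cases huz : u = z
    · subst huz; exact hzbound v huv
    · by_cases hvz : v = z
      · subst hvz
        rw [Nat.add_comm]
        exact hzbound u huv.symm
      · have hadj : (oreCompose G1 G2 x y z A).Adj (Sum.inr ⟨u, huz⟩) (Sum.inr ⟨v, hvz⟩) :=
          (adj_inr_inr G1 G2 x y z A).mpr huv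
        have h0 := hOreH _ _ hadj
        have hdu : deg (oreCompose G1 G2 x y z A) (Sum.inr ⟨u, huz⟩) = deg G2 u :=
          deg_inr G1 G2 x y z A ⟨u, huz⟩
        have hdv : deg (oreCompose G1 G2 x y z A) (Sum.inr ⟨v, hvz⟩) = deg G2 v :=
          deg_inr G1 G2 x y z A ⟨v, hvz⟩
        omega
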